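/- Let 𝒲 be a Whitney covering of a domain Ω ⊂ ℝ^d, let g ∈ L^1_loc(ℝ^d) be nonnegative, let r > 0 and η > 0. Then for every cube Q ∈ 𝒲 one has ∑_{S∈𝒲 : D(Q,S) < r} (∫_S g(x) dx) / D(Q,S)^{d−η} ≤ C r^{η} inf_{y∈Q} Mg(y), with C depending only on d and η. -/

import Mathlib

open MeasureTheory Metric Set
open scoped ENNReal NNReal Topology Classical

noncomputable section

namespace CZ

/-- We model `ℝ^d` as `Fin d → ℝ` (so that sup-norm balls are cubes). -/
abbrev Euc (d : ℕ) := Fin d → ℝ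

variable {d : ℕ}

/-- The order `|α|` of a multiindex `α ∈ ℕ^d`. -/
def mdeg (α : Fin d → ℕ) : ℕ := ∑ i, α i

/-- Partial derivative in the `i`-th coordinate direction. -/
def pder (i : Fin d) (f : Euc d → ℝ) : Euc d → ℝ := fun x => fderiv ℝ f x (Pi.single i 1)

/-- Iterated partial derivative `D^α` for a multiindex `α`. -/
def mderiv (α : Fin d → ℕ) (f : Euc d → ℝ) : Euc d → ℝ :=
  (List.finRange d).foldr (fun i g => (pder i)^[α i] g) f

/-- `g` is the `α`-th distributional (weak) derivative of `f` on `U`. -/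
def IsWeakDeriv (U : Set (Euc d)) (α : Fin d → ℕ) (f g : Euc d → ℝ) : Prop :=
  ∀ φ : Euc d → ℝ, ContDiff ℝ (⊤ : ℕ∞) φ → HasCompactSupport φ → tsupport φ ⊆ U →
    ∫ x in U, f x * mderiv α φ x = (-1 : ℝ) ^ mdeg α * ∫ x in U, g x * φ x

/-- A choice of the `α`-th weak derivative of `f` on `U` (junk value `0` if none exists). -/
def weakDeriv (U : Set (Euc d)) (α : Fin d → ℕ) (f : Euc d → ℝ) : Euc d → ℝ :=
  if h : ∃ g, IsWeakDeriv U α f g then h.choose else 0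

/-- Membership in the Sobolev space `W^{n,p}(U)`. -/
def MemSobolev (n : ℕ) (p : ℝ≥0∞) (U : Set (Euc d)) (f : Euc d → ℝ) : Prop :=
  MemLp f p (volume.restrict U) ∧
  ∀ α : Fin d → ℕ, mdeg α ≤ n → ∃ g, IsWeakDeriv U α f g ∧ MemLp g p (volume.restrict U)

/-- The Sobolev norm `∑_{|α| ≤ n} ‖D^α f‖_{L^p(U)}` (as an extended real). -/
def sobNorm (n : ℕ) (p : ℝ≥0∞) (U : Set (Euc d)) (f : Euc d → ℝ) : ℝ≥0∞ :=
  ∑' α : {α : Fin d → ℕ // mdeg α ≤ n}, eLpNorm (weakDeriv U α.1 f) p (volume.restrict U)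

/-- `|∇^n f|(x) = ∑_{|α| = n} |D^α f(x)|`, using weak derivatives on `U`. -/
def gradAbs (n : ℕ) (U : Set (Euc d)) (f : Euc d → ℝ) (x : Euc d) : ℝ :=
  ∑' α : {α : Fin d → ℕ // mdeg α = n}, |weakDeriv U α.1 f x|

/-- An axis-parallel cube, given by its center and side length. -/
structure Cube (d : ℕ) where
  center : Euc d
  side : ℝ

/-- The (closed) cube as a subset of `ℝ^d`. -/
def Cube.set (Q : Cube d) : Set (Euc d) := {y | ∀ i, |y i - Q.center i| ≤ Q.side / 2}

/-- The concentric dilation `rQ` of a cube. -/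
def Cube.dil (Q : Cube d) (r : ℝ) : Cube d := ⟨Q.center, r * Q.side⟩

/-- A dyadic cube of the standard dyadic grid. -/
def Cube.IsDyadic (Q : Cube d) : Prop :=
  ∃ k : ℤ, Q.side = (2 : ℝ) ^ (-k) ∧ ∀ i, ∃ m : ℤ, Q.center i = ((m : ℝ) + 1 / 2) * Q.side

/-- Distance between two sets. -/
def sdist (A B : Set (Euc d)) : ℝ := sInf ((fun q : Euc d × Euc d => dist q.1 q.2) '' (A ×ˢ B))

/-- The long distance `D(Q,S) = ℓ(Q) + ℓ(S) + dist(Q,S)`. -/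
def longDist (Q S : Cube d) : ℝ := Q.side + S.side + sdist Q.set S.set

/-- A Whitney covering of `Ω` with Whitney constant `Cw`: dyadic cubes with pairwise
disjoint interiors covering `Ω`, side length comparable to the distance to `∂Ω`,
neighbor cubes of comparable size, and finite superposition of the dilated cubes `10Q`. -/
structure WhitneyCovering (d : ℕ) (Cw : ℝ) (Ω : Set (Euc d)) where
  cubes : Set (Cube d)
  dyadic : ∀ Q ∈ cubes, Q.IsDyadic
  disj : cubes.Pairwise fun Q S => Disjoint (interior Q.set) (interior S.set)
  covers : ⋃ Q ∈ cubes, Q.set = Ω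
  Cw_pos : 0 < Cw
  dist_le : ∀ Q ∈ cubes, Cw * Q.side ≤ sdist Q.set (frontier Ω)
  le_dist : ∀ Q ∈ cubes, sdist Q.set (frontier Ω) ≤ 4 * Cw * Q.side
  neighbor : ∀ Q ∈ cubes, ∀ S ∈ cubes, (Q.set ∩ S.set).Nonempty → Q.side ≤ 2 * S.side
  finite_overlap : ∃ N : ℕ, ∀ x : Euc d,
    {Q | Q ∈ cubes ∧ x ∈ (Q.dil 10).set}.Finite ∧
    {Q | Q ∈ cubes ∧ x ∈ (Q.dil 10).set}.ncard ≤ N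

/-- A choice of a Whitney cube containing `x` (junk degenerate cube if there is none). -/
def cubeAt {Cw : ℝ} {Ω : Set (Euc d)} (𝒲 : WhitneyCovering d Cw Ω) (x : Euc d) : Cube d :=
  if h : ∃ Q ∈ 𝒲.cubes, x ∈ Q.set then h.choose else ⟨x, 0⟩

/-- An oriented Whitney covering: a Whitney covering together with a fixed central (root)
cube `Q₀` and a chain function assigning to each pair of cubes a chain of consecutive
neighboring Whitney cubes joining them. -/
structure OrientedWhitney (d : ℕ) (Cw : ℝ) (Ω : Set (Euc d)) extends
    WhitneyCovering d Cw Ω where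
  root : Cube d
  root_mem : root ∈ cubes
  chain : Cube d → Cube d → List (Cube d)
  chain_mem : ∀ Q ∈ cubes, ∀ S ∈ cubes, ∀ P ∈ chain Q S, P ∈ cubes
  chain_head : ∀ Q ∈ cubes, ∀ S ∈ cubes, (chain Q S).head? = some Q
  chain_last : ∀ Q ∈ cubes, ∀ S ∈ cubes, (chain Q S).getLast? = some S
  chain_adj : ∀ Q ∈ cubes, ∀ S ∈ cubes,
    (chain Q S).Chain' fun P P' => P ≠ P' ∧ (P.set ∩ P'.set).Nonempty

/-- The tree-like order on Whitney cubes: `S ≤ Q` iff `Q` lies on the chain `[S, Q₀]`. -/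
def OrientedWhitney.cle {Cw : ℝ} {Ω : Set (Euc d)} (OW : OrientedWhitney d Cw Ω)
    (S Q : Cube d) : Prop := Q ∈ OW.chain S OW.root

/-- The (uncentered) Hardy–Littlewood maximal function over cubes. -/
def maxFn (g : Euc d → ℝ) (x : Euc d) : ℝ≥0∞ :=
  ⨆ (Q : Cube d) (_ : x ∈ Q.set) (_ : 0 < Q.side),
    (∫⁻ y in Q.set, ENNReal.ofReal (g y)) / ENNReal.ofReal (Q.side ^ d)

/-- A smooth convolution Calderón–Zygmund kernel of order `n`:
`|∇^j K(x)| ≤ C_K / |x|^{d+j}` for `0 ≤ j ≤ n` and `x ≠ 0`. -/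
def IsCZKernel (d n : ℕ) (K : Euc d → ℝ) : Prop :=
  ContDiffOn ℝ n K {x : Euc d | x ≠ 0} ∧
  ∃ C : ℝ, 0 < C ∧ ∀ j : ℕ, j ≤ n → ∀ x : Euc d, x ≠ 0 →
    ‖iteratedFDerivWithin ℝ j K {x : Euc d | x ≠ 0} x‖ ≤ C / ‖x‖ ^ (d + j)

/-- A smooth convolution Calderón–Zygmund operator of order `n`: it has a smooth
convolution CZ kernel of order `n`, is bounded on `L^p(ℝ^d)` for every `1 < p < ∞`,
and is represented by its kernel off the support. -/
structure CZO (d n : ℕ) where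
  toFun : (Euc d → ℝ) → Euc d → ℝ
  kernel : Euc d → ℝ
  kernel_prop : IsCZKernel d n kernel
  bounded : ∀ p : ℝ, 1 < p → ∃ C : ℝ≥0∞, ∀ f : Euc d → ℝ,
    MemLp f (ENNReal.ofReal p) volume →
      MemLp (toFun f) (ENNReal.ofReal p) volume ∧
      eLpNorm (toFun f) (ENNReal.ofReal p) volume ≤ C * eLpNorm f (ENNReal.ofReal p) volume
  repr : ∀ p : ℝ, 1 < p → ∀ f : Euc d → ℝ, MemLp f (ENNReal.ofReal p) volume →
    ∀ x ∉ tsupport f, toFun f x = ∫ y in tsupport f, kernel (x - y) * f y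

/-- The truncated operator `T_Ω f = χ_Ω T(χ_Ω f)`. -/
def trunc {n : ℕ} (Ω : Set (Euc d)) (T : CZO d n) (f : Euc d → ℝ) : Euc d → ℝ :=
  Ω.indicator (T.toFun (Ω.indicator f))

/-- An operator `A` is bounded on the Sobolev space `W^{n,p}(Ω)`. -/
def BddOnSobolev (n : ℕ) (p : ℝ≥0∞) (Ω : Set (Euc d))
    (A : (Euc d → ℝ) → Euc d → ℝ) : Prop :=
  ∃ C : ℝ≥0∞, ∀ f, MemSobolev n p Ω f →
    MemSobolev n p Ω (A f) ∧ sobNorm n p Ω (A f) ≤ C * sobNorm n p Ω f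

/-- `P` is a polynomial of degree at most `m` whose derivatives of order `≤ m` have the
same averages on `3Q` as those of `f`. -/
def polyFits (m : ℕ) (Q : Cube d) (f : Euc d → ℝ) (P : MvPolynomial (Fin d) ℝ) : Prop :=
  P.totalDegree ≤ m ∧ ∀ β : Fin d → ℕ, mdeg β ≤ m →
    (⨍ x in (Q.dil 3).set, mderiv β (fun y => MvPolynomial.eval y P) x) =
      ⨍ x in (Q.dil 3).set, weakDeriv (interior (Q.dil 3).set) β f x

/-- The approximating polynomial `𝐏^m_{3Q} f` (junk value `0` if it does not exist). -/
def approxPoly (m : ℕ) (Q : Cube d) (f : Euc d → ℝ) : MvPolynomial (Fin d) ℝ :=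
  if h : ∃ P, polyFits m Q f P then h.choose else 0

/-- The measure `|∇^n f(x)|^p dx` restricted to `Ω`. -/
def gradMeasure (n : ℕ) (p : ℝ) (Ω : Set (Euc d)) (f : Euc d → ℝ) : Measure (Euc d) :=
  (volume.restrict Ω).withDensity fun x => ENNReal.ofReal (gradAbs n Ω f x ^ p)

/-- The dual exponent `p' = p/(p-1)`. -/
def pconj (p : ℝ) : ℝ := p / (p - 1)

/-- The distinguished "vertical" coordinate direction. -/
def vert (d : ℕ) [NeZero d] : Fin d := ⟨d - 1, Nat.sub_lt (NeZero.pos d) one_pos⟩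

/-- The cube of side `R` centered at the origin (in local coordinates). -/
def cube0 (d : ℕ) (R : ℝ) : Set (Euc d) := {y | ∀ i, |y i| ≤ R / 2}

/-- An `R`-window of the domain `Ω`, with Lipschitz constant `δ`:
a cube of side `R` centered at a boundary point, in which (after a rotation `rot`)
`Ω` coincides with the region above the graph of a `δ`-Lipschitz function. -/
structure Window (d : ℕ) [NeZero d] (δ R : ℝ) (Ω : Set (Euc d)) where
  center : Euc d
  center_mem : center ∈ frontier Ω
  rot : Euc d ≃ₗᵢ[ℝ] Euc d
  graphFn : Euc d → ℝ
  graphFn_horiz : ∀ y z : Euc d, (∀ i, i ≠ vert d → y i = z i) → graphFn y = graphFn z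
  graphFn_lip : ∀ y z : Euc d, |graphFn y - graphFn z| ≤ δ * ‖y - z‖
  graph : (fun x => rot (x - center)) '' Ω ∩ cube0 d (2 * R) =
    {y ∈ cube0 d (2 * R) | graphFn y < y (vert d)}

variable [NeZero d]

/-- The local coordinates map of a window. -/
def Window.toLoc {δ R : ℝ} {Ω : Set (Euc d)} (W : Window d δ R Ω) : Euc d → Euc d :=
  fun x => W.rot (x - W.center)

/-- The inverse of the local coordinates map of a window. -/
def Window.fromLoc {δ R : ℝ} {Ω : Set (Euc d)} (W : Window d δ R Ω) : Euc d → Euc d :=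
  fun y => W.rot.symm y + W.center

/-- The fixed small dilation factor `δ₀`. -/
def dil0 : ℝ := 1 / 4

/-- The core `δ₀𝒬` of a window. -/
def Window.core {δ R : ℝ} {Ω : Set (Euc d)} (W : Window d δ R Ω) : Set (Euc d) :=
  W.toLoc ⁻¹' cube0 d (dil0 * R)

/-- `Ω` is a (bounded) Lipschitz domain with character `(δ, R)`. -/
def LipschitzDomain (d : ℕ) [NeZero d] (δ R : ℝ) (Ω : Set (Euc d)) : Prop :=
  IsOpen Ω ∧ IsConnected Ω ∧ Bornology.IsBounded Ω ∧ 0 < δ ∧ 0 < R ∧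
  ∀ x ∈ frontier Ω, ∃ W : Window d δ R Ω, W.center = x

/-- A special (unbounded) Lipschitz domain: the region above the graph of a
`δ`-Lipschitz function, in the vertical direction. -/
def SpecialLipschitz (d : ℕ) [NeZero d] (δ : ℝ) (Ω : Set (Euc d)) : Prop :=
  0 < δ ∧ ∃ A : Euc d → ℝ, (∀ y z : Euc d, (∀ i, i ≠ vert d → y i = z i) → A y = A z) ∧
    (∀ y z : Euc d, |A y - A z| ≤ δ * ‖y - z‖) ∧ Ω = {y | A y < y (vert d)}

/-- The shadow `Sh(x)` of a point, relative to a window cube `𝒬` and a Whitney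
covering `𝒲` (in coordinates where the vertical direction is the last one). -/
def shadowPt {Cw : ℝ} {Ω : Set (Euc d)} (𝒲 : WhitneyCovering d Cw Ω) (𝒬 : Cube d)
    (x : Euc d) : Set (Euc d) :=
  {y | y ∈ 𝒬.set ∩ Ω ∧ y (vert d) < x (vert d) ∧
    ∀ i, i ≠ vert d → |x i - y i| ≤ (cubeAt 𝒲 x).side / 2}

/-- The vertically extended shadow `S̃h(x)` of a point. -/
def shadowPtExt {Cw : ℝ} {Ω : Set (Euc d)} (𝒲 : WhitneyCovering d Cw Ω) (𝒬 : Cube d)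
    (x : Euc d) : Set (Euc d) :=
  {y | y ∈ 𝒬.set ∩ Ω ∧ y (vert d) < x (vert d) + 2 * (cubeAt 𝒲 x).side ∧
    ∀ i, i ≠ vert d → |x i - y i| ≤ (cubeAt 𝒲 x).side / 2}

/-- `F` is the father of `Q`: the neighboring Whitney cube immediately above `Q`. -/
def IsFather {Cw : ℝ} {Ω : Set (Euc d)} (𝒲 : WhitneyCovering d Cw Ω) (F Q : Cube d) : Prop :=
  F ∈ 𝒲.cubes ∧ F ≠ Q ∧ (F.set ∩ Q.set).Nonempty ∧
  ∃ y ∈ F.set, Q.center (vert d) + Q.side / 2 < y (vert d) ∧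
    ∀ i, i ≠ vert d → y i = Q.center i

/-- The tree order on Whitney cubes: `P ≤ Q` iff `Q` is an iterated father of `P`. -/
def cubeLe {Cw : ℝ} {Ω : Set (Euc d)} (𝒲 : WhitneyCovering d Cw Ω) (P Q : Cube d) : Prop :=
  Relation.ReflTransGen (fun a b => IsFather 𝒲 b a) P Q

/-- The shadow of a Whitney cube: `Sh(Q) = ⋃_{P ≤ Q} P`. -/
def cubeShadow {Cw : ℝ} {Ω : Set (Euc d)} (𝒲 : WhitneyCovering d Cw Ω) (Q : Cube d) :
    Set (Euc d) :=
  ⋃ P ∈ {P | P ∈ 𝒲.cubes ∧ cubeLe 𝒲 P Q}, P.set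

/-- The left-hand side of the continuous `p`-Carleson condition at the point `a`:
`∫_{S̃h(a)} dist(x,∂Ω)^{(d-p)(1-p')} μ(Sh(x) ∩ Sh(a))^{p'} dx / dist(x,∂Ω)^d`. -/
def carlesonLHS (p : ℝ) {Cw : ℝ} {Ω : Set (Euc d)} (𝒲 : WhitneyCovering d Cw Ω)
    (𝒬 : Cube d) (μ : Measure (Euc d)) (a : Euc d) : ℝ≥0∞ :=
  ∫⁻ x in shadowPtExt 𝒲 𝒬 a,
    ENNReal.ofReal (infDist x (frontier Ω) ^ (((d : ℝ) - p) * (1 - pconj p))) *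
      μ (shadowPt 𝒲 𝒬 x ∩ shadowPt 𝒲 𝒬 a) ^ pconj p /
      ENNReal.ofReal (infDist x (frontier Ω) ^ (d : ℝ))

/-- The window cube of side `R` centered at the origin of the local coordinates. -/
def locWindowCube (d : ℕ) (R : ℝ) : Cube d := ⟨0, R⟩

/-- `μ` is a `p`-Carleson measure for the Lipschitz domain `Ω`: it is a finite (positive
Borel) measure and, for every window and every properly oriented Whitney covering
(expressed in the local coordinates of the window), the continuous Carleson inequality
holds at every point `a ∈ δ₀𝒬 ∩ Ω`. -/
def IsCarleson (p δ R : ℝ) (Ω : Set (Euc d)) (μ : Measure (Euc d)) : Prop :=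
  IsFiniteMeasure μ ∧
  ∃ C : ℝ≥0∞, ∀ (W : Window d δ R Ω) (Cw : ℝ)
    (𝒲 : WhitneyCovering d Cw (W.toLoc '' Ω)), ∀ a ∈ W.core ∩ Ω,
      carlesonLHS p 𝒲 (locWindowCube d R) (μ.map W.toLoc) (W.toLoc a)
        ≤ C * (μ.map W.toLoc) (shadowPt 𝒲 (locWindowCube d R) (W.toLoc a))

/-- The Whitney averaging function `𝒜f(x) = ∑_Q χ_Q(x) ⨍_{3Q} f`. -/
def avgFn {Cw : ℝ} {Ω : Set (Euc d)} (𝒲 : WhitneyCovering d Cw Ω) (f : Euc d → ℝ)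
    (x : Euc d) : ℝ :=
  ⨍ y in ((cubeAt 𝒲 x).dil 3).set, f y


omit [NeZero d] in
lemma mem_cube_iff {Q : Cube d} {x : Euc d} : x ∈ Q.set ↔ ∀ i, |x i - Q.center i| ≤ Q.side / 2 :=
  Iff.rfl

omit [NeZero d] in
lemma Cube.ext' {Q S : Cube d} (h1 : Q.center = S.center) (h2 : Q.side = S.side) : Q = S := by
  cases Q; cases S; simp_all

omit [NeZero d] in
lemma cube_set_eq_pi (Q : Cube d) :
    Q.set = Set.pi Set.univ (fun i => Icc (Q.center i - Q.side / 2) (Q.center i + Q.side / 2)) := by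
  ext y
  simp only [mem_cube_iff, Set.mem_pi, Set.mem_univ, forall_true_left, mem_Icc]
  refine forall_congr' fun i => ?_
  rw [abs_le]
  constructor <;> rintro ⟨h1, h2⟩ <;> constructor <;> linarith

omit [NeZero d] in
lemma cube_compact (Q : Cube d) : IsCompact Q.set := by
  rw [cube_set_eq_pi]; exact isCompact_univ_pi fun i => isCompact_Icc

omit [NeZero d] in
lemma center_mem_cube {Q : Cube d} (h : 0 ≤ Q.side) : Q.center ∈ Q.set := by
  intro i; simpa using by linarith

omit [NeZero d] in
lemma cube_frontier_null (Q : Cube d) (h : 0 ≤ Q.side) :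
    volume (Q.set \ interior Q.set) = 0 := by
  rw [cube_set_eq_pi, interior_pi_set finite_univ]
  have hIcc : volume (Set.pi Set.univ
      (fun i : Fin d => Icc (Q.center i - Q.side / 2) (Q.center i + Q.side / 2)))
      = ∏ _i : Fin d, ENNReal.ofReal Q.side := by
    rw [volume_pi_pi]
    refine Finset.prod_congr rfl fun i _ => ?_
    rw [Real.volume_Icc]; ring_nf
  have hIoo : volume (Set.pi Set.univ
      (fun i : Fin d => interior (Icc (Q.center i - Q.side / 2) (Q.center i + Q.side / 2))))
      = ∏ _i : Fin d, ENNReal.ofReal Q.side := by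
    rw [volume_pi_pi]
    refine Finset.prod_congr rfl fun i _ => ?_
    rw [interior_Icc, Real.volume_Ioo]; ring_nf
  have hsub : Set.pi Set.univ
      (fun i : Fin d => interior (Icc (Q.center i - Q.side / 2) (Q.center i + Q.side / 2)))
      ⊆ Set.pi Set.univ
      (fun i : Fin d => Icc (Q.center i - Q.side / 2) (Q.center i + Q.side / 2)) :=
    Set.pi_mono fun i _ => interior_subset
  have hmeas : MeasurableSet (Set.pi Set.univ
      (fun i : Fin d => interior (Icc (Q.center i - Q.side / 2) (Q.center i + Q.side / 2)))) :=
    (isOpen_set_pi finite_univ fun i _ => isOpen_interior).measurableSet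
  have hfin : volume (Set.pi Set.univ
      (fun i : Fin d => interior (Icc (Q.center i - Q.side / 2) (Q.center i + Q.side / 2)))) ≠ ⊤ := by
    rw [hIoo]
    exact ENNReal.prod_ne_top fun i _ => ENNReal.ofReal_ne_top
  rw [measure_diff hsub hmeas.nullMeasurableSet hfin, hIcc, hIoo, tsub_self]

omit [NeZero d] in
lemma cube_ae_interior (Q : Cube d) (h : 0 ≤ Q.side) :
    Q.set =ᵐ[volume] interior Q.set := by
  rw [MeasureTheory.ae_eq_set]
  refine ⟨cube_frontier_null Q h, ?_⟩
  rw [diff_eq_empty.2 interior_subset]; exact measure_empty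

omit [NeZero d] in
lemma dyadic_countable : {Q : Cube d | Q.IsDyadic}.Countable := by
  rw [← Set.countable_coe_iff]
  let f : {Q : Cube d // Q.IsDyadic} → ℤ × (Fin d → ℤ) := fun Q =>
    (Q.2.choose, fun i => (Q.2.choose_spec.2 i).choose)
  have hf : Function.Injective f := by
    intro a b hab
    have h1 : a.2.choose = b.2.choose := congrArg Prod.fst hab
    have hside : a.1.side = b.1.side := by
      rw [a.2.choose_spec.1, b.2.choose_spec.1, h1]
    have hcenter : a.1.center = b.1.center := funext fun i => by
      have h2 : (a.2.choose_spec.2 i).choose = (b.2.choose_spec.2 i).choose :=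
        congrFun (congrArg Prod.snd hab) i
      rw [(a.2.choose_spec.2 i).choose_spec, (b.2.choose_spec.2 i).choose_spec, h2, hside]
    exact Subtype.ext (Cube.ext' hcenter hside)
  exact hf.countable

omit [NeZero d] in
lemma sdist_nonneg (A B : Set (Euc d)) : 0 ≤ sdist A B :=
  Real.sInf_nonneg (by rintro x ⟨q, _, rfl⟩; exact dist_nonneg)

omit [NeZero d] in
lemma dist_center_le {Q : Cube d} (hQ : 0 ≤ Q.side) {x : Euc d} (hx : x ∈ Q.set) :
    dist x Q.center ≤ Q.side / 2 :=
  (dist_pi_le_iff (by linarith)).2 fun i => by rw [Real.dist_eq]; exact hx i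

omit [NeZero d] in
lemma dist_le_longDist {Q S : Cube d} (hQ : 0 ≤ Q.side) (hS : 0 ≤ S.side) {z : Euc d}
    (hz : z ∈ S.set) : dist z Q.center ≤ longDist Q S := by
  have key : dist z Q.center - S.side - Q.side / 2 ≤ sdist Q.set S.set := by
    apply le_csInf
    · exact ⟨dist Q.center z, ⟨(Q.center, z), ⟨center_mem_cube hQ, hz⟩, rfl⟩⟩
    · rintro b ⟨⟨x, w⟩, ⟨hx, hw⟩, rfl⟩
      have h1 : dist z w ≤ S.side := by
        calc dist z w ≤ dist z S.center + dist S.center w := dist_triangle _ _ _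
          _ ≤ S.side / 2 + S.side / 2 := by
              refine add_le_add (dist_center_le hS hz) ?_
              rw [dist_comm]; exact dist_center_le hS hw
          _ = S.side := by ring
      have h2 : dist x Q.center ≤ Q.side / 2 := dist_center_le hQ hx
      have h3 : dist z Q.center ≤ dist z w + dist w x + dist x Q.center := dist_triangle4 _ _ _ _
      have h4 : dist w x = dist x w := dist_comm _ _
      simp only []
      linarith
  unfold longDist
  linarith

lemma calc1 (η : ℝ) {u : ℝ} (hu : 0 < u) (dn : ℕ) :
    ((u / 2) ^ (η - (dn : ℝ)) + u ^ (η - (dn : ℝ))) * (2 * u) ^ dn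
      = (((2 : ℝ) ^ ((dn : ℝ) - η) + 1) * 2 ^ dn) * u ^ η := by
  have h2 : (0 : ℝ) < 2 := two_pos
  have e1 : (u / 2 : ℝ) ^ (η - (dn : ℝ)) = u ^ (η - (dn : ℝ)) * (2 : ℝ) ^ ((dn : ℝ) - η) := by
    rw [Real.div_rpow hu.le h2.le, div_eq_mul_inv, ← Real.rpow_neg h2.le, neg_sub]
  have e3 : ((2 : ℝ) * u) ^ dn = (2 : ℝ) ^ dn * u ^ dn := mul_pow _ _ _
  have e4 : u ^ (η - (dn : ℝ)) * u ^ (dn : ℕ) = u ^ η := by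
    rw [← Real.rpow_natCast u dn, ← Real.rpow_add hu, sub_add_cancel]
  calc ((u / 2) ^ (η - (dn : ℝ)) + u ^ (η - (dn : ℝ))) * (2 * u) ^ dn
      = (u ^ (η - (dn : ℝ)) * ((2 : ℝ) ^ ((dn : ℝ) - η) + 1)) * ((2 : ℝ) ^ dn * u ^ dn) := by
        rw [e1, e3]; ring
    _ = (((2 : ℝ) ^ ((dn : ℝ) - η) + 1) * 2 ^ dn) * (u ^ (η - (dn : ℝ)) * u ^ (dn : ℕ)) := by
        ring
    _ = (((2 : ℝ) ^ ((dn : ℝ) - η) + 1) * 2 ^ dn) * u ^ η := by rw [e4]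

/-- Lemma 3.1 (2): for a Whitney covering `𝒲` of a domain `Ω ⊂ ℝ^d`,
a nonnegative `g ∈ L^1_loc`, `r > 0` and `η > 0`, for every `Q ∈ 𝒲`,
`∑_{S : D(Q,S) < r} (∫_S g) / D(Q,S)^{d-η} ≤ C r^{η} inf_{y∈Q} Mg(y)`,
with `C` depending only on `d` and `η`. -/
theorem statement6 {d : ℕ} (η : ℝ) (hη : 0 < η) :
    ∃ C : ℝ, 0 < C ∧ ∀ (Ω : Set (Euc d)), IsOpen Ω → IsConnected Ω →
      ∀ (Cw : ℝ) (𝒲 : WhitneyCovering d Cw Ω) (g : Euc d → ℝ),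
        LocallyIntegrable g volume → (∀ x, 0 ≤ g x) →
        ∀ r : ℝ, 0 < r → ∀ Q ∈ 𝒲.cubes,
          (∑' S : {S : Cube d // S ∈ 𝒲.cubes ∧ longDist Q S < r},
              ENNReal.ofReal (∫ x in (S.1 : Cube d).set, g x) /
                ENNReal.ofReal (longDist Q S.1 ^ ((d : ℝ) - η)))
            ≤ ENNReal.ofReal (C * r ^ η) * ⨅ y ∈ Q.set, maxFn g y := by
  classical
  set β : ℝ := ((2 : ℝ)⁻¹) ^ η with hβdef
  have hβ0 : 0 < β := Real.rpow_pos_of_pos (by norm_num) _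
  have hβ1 : β < 1 := Real.rpow_lt_one (by norm_num) (by norm_num) hη
  set K : ℝ := ((2 : ℝ) ^ ((d : ℝ) - η) + 1) * 2 ^ d with hKdef
  have hK0 : 0 < K := by positivity
  have hinv0 : 0 < (1 - β)⁻¹ := inv_pos.2 (by linarith)
  refine ⟨K * (1 - β)⁻¹, mul_pos hK0 hinv0, ?_⟩
  intro Ω hΩo hΩc Cw 𝒲 g hgloc hg r hr Q hQ
  have sidepos : ∀ P ∈ 𝒲.cubes, 0 < P.side := by
    intro P hP
    obtain ⟨k, hk, -⟩ := 𝒲.dyadic P hP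
    rw [hk]; positivity
  have hQs : 0 < Q.side := sidepos Q hQ
  haveI hcnt : Countable {S : Cube d // S ∈ 𝒲.cubes ∧ longDist Q S < r} := by
    have hsub : {S : Cube d | S ∈ 𝒲.cubes ∧ longDist Q S < r} ⊆ {S : Cube d | S.IsDyadic} :=
      fun S hS => 𝒲.dyadic S hS.1
    exact (dyadic_countable.mono hsub).to_subtype
  have hD0 : ∀ S : {S : Cube d // S ∈ 𝒲.cubes ∧ longDist Q S < r},
      0 < longDist Q S.1 := by
    intro S
    have h1 := sidepos S.1 S.2.1
    have h2 := sdist_nonneg Q.set (S.1).set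
    unfold longDist; linarith
  have hCr : 0 < K * (1 - β)⁻¹ * r ^ η := by
    have h1 := Real.rpow_pos_of_pos hr η
    positivity
  have hc0 : ENNReal.ofReal (K * (1 - β)⁻¹ * r ^ η) ≠ 0 := (ENNReal.ofReal_pos.2 hCr).ne'
  have hcT : ENNReal.ofReal (K * (1 - β)⁻¹ * r ^ η) ≠ ⊤ := ENNReal.ofReal_ne_top
  rw [mul_comm, ← ENNReal.div_le_iff hc0 hcT]
  refine le_iInf₂ fun y hy => ?_
  rw [ENNReal.div_le_iff hc0 hcT, mul_comm]
  have hy' : ∀ i, |y i - Q.center i| ≤ Q.side / 2 := mem_cube_iff.1 hy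
  set g' : Euc d → ℝ≥0∞ := fun x => ENNReal.ofReal (g x) with hg'def
  set M : ℝ≥0∞ := maxFn g y with hMdef
  set t : ℕ → ℝ := fun j => r * (2 : ℝ)⁻¹ ^ j with htdef
  have ht0 : ∀ j, 0 < t j := fun j => by
    have : (0:ℝ) < (2:ℝ)⁻¹ ^ j := by positivity
    simp only [htdef]; positivity
  have htsucc : ∀ j, t (j + 1) = t j / 2 := fun j => by
    simp only [htdef, pow_succ]; ring
  set cconst : ℕ → ℝ := fun j => (t j / 2) ^ (η - (d : ℝ)) + (t j) ^ (η - (d : ℝ))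
    with hccdef
  have hcc0 : ∀ j, 0 ≤ cconst j := fun j => by
    have h1 : (0:ℝ) ≤ (t j / 2) ^ (η - (d : ℝ)) := Real.rpow_nonneg (by linarith [ht0 j]) _
    have h2 : (0:ℝ) ≤ (t j) ^ (η - (d : ℝ)) := Real.rpow_nonneg (ht0 j).le _
    simp only [hccdef]; linarith
  set cond : ℕ → {S : Cube d // S ∈ 𝒲.cubes ∧ longDist Q S < r} → Prop :=
    fun j S => t j / 2 ≤ longDist Q S.1 ∧ longDist Q S.1 < t j with hconddef
  set H : ℕ → {S : Cube d // S ∈ 𝒲.cubes ∧ longDist Q S < r} → ℝ≥0∞ :=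
    fun j S => if cond j S then ENNReal.ofReal (cconst j) * ∫⁻ x in interior (S.1).set, g' x
      else 0 with hHdef
  -- Step A: pointwise bound by the annular pieces
  have stepA : ∀ S : {S : Cube d // S ∈ 𝒲.cubes ∧ longDist Q S < r},
      ENNReal.ofReal (∫ x in (S.1 : Cube d).set, g x) /
        ENNReal.ofReal (longDist Q S.1 ^ ((d : ℝ) - η)) ≤ ∑' j : ℕ, H j S := by
    intro S
    obtain ⟨hSmem, hSr⟩ := S.2
    have hDpos : 0 < longDist Q S.1 := hD0 S
    have hex : ∃ j, t j / 2 ≤ longDist Q S.1 := by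
      obtain ⟨n, hn⟩ := exists_pow_lt_of_lt_one
        (show (0:ℝ) < 2 * longDist Q S.1 / r by positivity)
        (show (2:ℝ)⁻¹ < 1 by norm_num)
      refine ⟨n, ?_⟩
      rw [lt_div_iff₀ hr] at hn
      simp only [htdef]
      nlinarith
    set j₀ := Nat.find hex with hj₀def
    have hj₀1 : t j₀ / 2 ≤ longDist Q S.1 := Nat.find_spec hex
    have hj₀2 : longDist Q S.1 < t j₀ := by
      rcases Nat.eq_zero_or_pos j₀ with h0 | hpos
      · rw [h0]; simpa [htdef] using hSr
      · have hmin := Nat.find_min hex (show j₀ - 1 < j₀ by omega)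
        push_neg at hmin
        have heq : t j₀ = t (j₀ - 1) / 2 := by
          rw [← htsucc]; congr 1; omega
        linarith
    have hcj : cond j₀ S := ⟨hj₀1, hj₀2⟩
    have hint : IntegrableOn g (S.1).set volume :=
      hgloc.integrableOn_isCompact (cube_compact _)
    have h1 : ENNReal.ofReal (∫ x in (S.1).set, g x) = ∫⁻ x in (S.1).set, g' x :=
      ofReal_integral_eq_lintegral_ofReal hint (Filter.Eventually.of_forall fun x => hg x)
    have h2 : (∫⁻ x in (S.1).set, g' x) = ∫⁻ x in interior (S.1).set, g' x :=
      setLIntegral_congr (cube_ae_interior _ (sidepos _ hSmem).le)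
    have h3 : (ENNReal.ofReal (longDist Q S.1 ^ ((d : ℝ) - η)))⁻¹
        = ENNReal.ofReal (longDist Q S.1 ^ (η - (d : ℝ))) := by
      rw [← ENNReal.ofReal_inv_of_pos (Real.rpow_pos_of_pos hDpos _),
        ← Real.rpow_neg hDpos.le, neg_sub]
    have hDb : longDist Q S.1 ^ (η - (d : ℝ)) ≤ cconst j₀ := by
      rcases le_or_gt (d : ℝ) η with hcase | hcase
      · have hb : longDist Q S.1 ^ (η - (d : ℝ)) ≤ (t j₀) ^ (η - (d : ℝ)) :=
          Real.rpow_le_rpow hDpos.le hj₀2.le (by linarith)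
        have h0 : (0:ℝ) ≤ (t j₀ / 2) ^ (η - (d : ℝ)) :=
          Real.rpow_nonneg (by linarith [ht0 j₀]) _
        simp only [hccdef]; linarith
      · have hb : longDist Q S.1 ^ (η - (d : ℝ)) ≤ (t j₀ / 2) ^ (η - (d : ℝ)) :=
          Real.rpow_le_rpow_of_nonpos (by linarith [ht0 j₀]) hj₀1 (by linarith)
        have h0 : (0:ℝ) ≤ (t j₀) ^ (η - (d : ℝ)) := Real.rpow_nonneg (ht0 j₀).le _
        simp only [hccdef]; linarith
    calc ENNReal.ofReal (∫ x in (S.1 : Cube d).set, g x) /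
          ENNReal.ofReal (longDist Q S.1 ^ ((d : ℝ) - η))
        = (∫⁻ x in interior (S.1).set, g' x) *
            (ENNReal.ofReal (longDist Q S.1 ^ ((d : ℝ) - η)))⁻¹ := by
          rw [h1, h2, div_eq_mul_inv]
      _ = (∫⁻ x in interior (S.1).set, g' x) *
            ENNReal.ofReal (longDist Q S.1 ^ (η - (d : ℝ))) := by rw [h3]
      _ ≤ (∫⁻ x in interior (S.1).set, g' x) * ENNReal.ofReal (cconst j₀) :=
          mul_le_mul_right (ENNReal.ofReal_le_ofReal hDb) _
      _ = H j₀ S := by rw [hHdef]; simp only [if_pos hcj]; ring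
      _ ≤ ∑' j : ℕ, H j S := ENNReal.le_tsum j₀
  -- Step C: summing the j-th annulus
  have stepC : ∀ j : ℕ, (∑' S : {S : Cube d // S ∈ 𝒲.cubes ∧ longDist Q S < r}, H j S)
      ≤ ENNReal.ofReal (cconst j * (2 * t j) ^ d) * M := by
    intro j
    by_cases hA : ∃ S : {S : Cube d // S ∈ 𝒲.cubes ∧ longDist Q S < r}, cond j S
    · obtain ⟨S₀, hS₀⟩ := hA
      have hQled : Q.side < t j := by
        have h1 := sidepos S₀.1 S₀.2.1
        have h2 := sdist_nonneg Q.set (S₀.1).set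
        have h3 : longDist Q S₀.1 < t j := hS₀.2
        have h4 : Q.side ≤ longDist Q S₀.1 := by unfold longDist; linarith
        linarith
      set B : Cube d := ⟨Q.center, 2 * t j⟩ with hBdef
      have hBside : 0 < B.side := by
        show 0 < 2 * t j
        linarith [ht0 j]
      have hymem : y ∈ B.set := by
        rw [mem_cube_iff]
        intro i
        show |y i - Q.center i| ≤ 2 * t j / 2
        linarith [hy' i]
      have hsubB : ∀ S : {S : Cube d // S ∈ 𝒲.cubes ∧ longDist Q S < r},
          cond j S → (S.1).set ⊆ B.set := by
        intro S hc z hz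
        rw [mem_cube_iff]
        intro i
        show |z i - Q.center i| ≤ 2 * t j / 2
        have h1 : dist z Q.center ≤ longDist Q S.1 :=
          dist_le_longDist hQs.le (sidepos _ S.2.1).le hz
        have h2 := dist_le_pi_dist z Q.center i
        rw [Real.dist_eq] at h2
        have h3 := hc.2
        linarith
      have hval : ∀ S : {S : Cube d // S ∈ 𝒲.cubes ∧ longDist Q S < r},
          H j S = ENNReal.ofReal (cconst j) *
            (if cond j S then ∫⁻ x in interior (S.1).set, g' x else 0) := by
        intro S
        by_cases h : cond j S <;> simp [hHdef, h]
      rw [tsum_congr hval, ENNReal.tsum_mul_left]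
      have hbound : (∑' S : {S : Cube d // S ∈ 𝒲.cubes ∧ longDist Q S < r},
          (if cond j S then ∫⁻ x in interior (S.1).set, g' x else 0))
          ≤ ∫⁻ x in B.set, g' x := by
        set s : {S : Cube d // S ∈ 𝒲.cubes ∧ longDist Q S < r} → Set (Euc d) :=
          fun S => if cond j S then interior (S.1).set else ∅ with hsdef
        have hmeas : ∀ S, MeasurableSet (s S) := by
          intro S
          simp only [hsdef]
          by_cases h : cond j S
          · rw [if_pos h]; exact isOpen_interior.measurableSet
          · rw [if_neg h]; exact MeasurableSet.empty
        have hdisj : Pairwise (Function.onFun Disjoint s) := by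
          intro S S' hne
          show Disjoint (s S) (s S')
          simp only [hsdef]
          by_cases h1 : cond j S
          · by_cases h2 : cond j S'
            · rw [if_pos h1, if_pos h2]
              exact 𝒲.disj S.2.1 S'.2.1 (fun h => hne (Subtype.ext h))
            · rw [if_neg h2]; exact Set.disjoint_empty _
          · rw [if_neg h1]; exact Set.empty_disjoint _
        calc (∑' S : {S : Cube d // S ∈ 𝒲.cubes ∧ longDist Q S < r},
              (if cond j S then ∫⁻ x in interior (S.1).set, g' x else 0))
            = ∑' S : {S : Cube d // S ∈ 𝒲.cubes ∧ longDist Q S < r},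
                ∫⁻ x in s S, g' x := by
              refine tsum_congr fun S => ?_
              simp only [hsdef]
              by_cases h : cond j S
              · rw [if_pos h, if_pos h]
              · rw [if_neg h, if_neg h, Measure.restrict_empty, lintegral_zero_measure]
          _ = ∫⁻ x in ⋃ S : {S : Cube d // S ∈ 𝒲.cubes ∧ longDist Q S < r}, s S, g' x :=
              (lintegral_iUnion hmeas hdisj _).symm
          _ ≤ ∫⁻ x in B.set, g' x := by
              refine lintegral_mono_set (iUnion_subset fun S => ?_)
              by_cases h : cond j S
              · simp only [hsdef, if_pos h]
                exact interior_subset.trans (hsubB S h)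
              · simp [hsdef, h]
      have hmax : (∫⁻ x in B.set, g' x) ≤ ENNReal.ofReal (B.side ^ d) * M := by
        have hle : (∫⁻ x in B.set, g' x) / ENNReal.ofReal (B.side ^ d) ≤ M := by
          rw [hMdef]
          exact le_iSup_of_le B (le_iSup_of_le hymem (le_iSup_of_le hBside le_rfl))
        have hopos : (0:ℝ) < B.side ^ d := pow_pos hBside d
        rw [ENNReal.div_le_iff (ENNReal.ofReal_pos.2 hopos).ne' ENNReal.ofReal_ne_top] at hle
        calc (∫⁻ x in B.set, g' x) ≤ M * ENNReal.ofReal (B.side ^ d) := hle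
          _ = ENNReal.ofReal (B.side ^ d) * M := mul_comm _ _
      calc ENNReal.ofReal (cconst j) *
            (∑' S : {S : Cube d // S ∈ 𝒲.cubes ∧ longDist Q S < r},
              (if cond j S then ∫⁻ x in interior (S.1).set, g' x else 0))
          ≤ ENNReal.ofReal (cconst j) * (ENNReal.ofReal (B.side ^ d) * M) :=
            mul_le_mul_right (hbound.trans hmax) _
        _ = ENNReal.ofReal (cconst j * (2 * t j) ^ d) * M := by
            rw [ENNReal.ofReal_mul (hcc0 j), mul_assoc]
    · push_neg at hA
      have hzero : ∀ S : {S : Cube d // S ∈ 𝒲.cubes ∧ longDist Q S < r}, H j S = 0 :=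
        fun S => by simp [hHdef, hA S]
      rw [tsum_congr hzero]
      simp
  -- Step D: summing the geometric series
  have stepD : (∑' j : ℕ, ENNReal.ofReal (cconst j * (2 * t j) ^ d) * M)
      ≤ ENNReal.ofReal (K * (1 - β)⁻¹ * r ^ η) * M := by
    have keyj : ∀ j : ℕ, cconst j * (2 * t j) ^ d = (K * r ^ η) * β ^ j := by
      intro j
      have h1 := calc1 η (ht0 j) d
      have h2 : (t j) ^ η = r ^ η * β ^ j := by
        simp only [htdef]
        rw [Real.mul_rpow hr.le (by positivity), ← Real.rpow_natCast ((2:ℝ)⁻¹) j,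
          ← Real.rpow_mul (by norm_num), mul_comm (j:ℝ) η,
          Real.rpow_mul (by norm_num : (0:ℝ) ≤ 2⁻¹), Real.rpow_natCast]
      calc cconst j * (2 * t j) ^ d = K * (t j) ^ η := by
            simp only [hccdef, hKdef]; exact h1
        _ = K * (r ^ η * β ^ j) := by rw [h2]
        _ = (K * r ^ η) * β ^ j := by ring
    have hofReal : ∀ j : ℕ, ENNReal.ofReal (cconst j * (2 * t j) ^ d) * M
        = (ENNReal.ofReal (K * r ^ η) * M) * (ENNReal.ofReal β) ^ j := by
      intro j
      have hKr : (0:ℝ) ≤ K * r ^ η := by positivity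
      rw [keyj j, ENNReal.ofReal_mul hKr, ← ENNReal.ofReal_pow hβ0.le]
      ring
    rw [tsum_congr hofReal, ENNReal.tsum_mul_left, ENNReal.tsum_geometric]
    have h1mq : (1 - ENNReal.ofReal β)⁻¹ = ENNReal.ofReal ((1 - β)⁻¹) := by
      rw [← ENNReal.ofReal_one, ← ENNReal.ofReal_sub 1 hβ0.le,
        ENNReal.ofReal_inv_of_pos (by linarith)]
    rw [h1mq]
    have hfin : ENNReal.ofReal (K * r ^ η) * ENNReal.ofReal ((1 - β)⁻¹)
        = ENNReal.ofReal (K * (1 - β)⁻¹ * r ^ η) := by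
      rw [← ENNReal.ofReal_mul (by positivity : (0:ℝ) ≤ K * r ^ η)]
      congr 1
      ring
    calc ENNReal.ofReal (K * r ^ η) * M * ENNReal.ofReal ((1 - β)⁻¹)
        = ENNReal.ofReal (K * r ^ η) * ENNReal.ofReal ((1 - β)⁻¹) * M := by ring
      _ ≤ ENNReal.ofReal (K * (1 - β)⁻¹ * r ^ η) * M := le_of_eq (by rw [hfin])
  calc (∑' S : {S : Cube d // S ∈ 𝒲.cubes ∧ longDist Q S < r},
        ENNReal.ofReal (∫ x in (S.1 : Cube d).set, g x) /
          ENNReal.ofReal (longDist Q S.1 ^ ((d : ℝ) - η)))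
      ≤ ∑' S : {S : Cube d // S ∈ 𝒲.cubes ∧ longDist Q S < r}, ∑' j : ℕ, H j S :=
        ENNReal.tsum_le_tsum stepA
    _ = ∑' j : ℕ, ∑' S : {S : Cube d // S ∈ 𝒲.cubes ∧ longDist Q S < r}, H j S :=
        ENNReal.tsum_comm
    _ ≤ ∑' j : ℕ, ENNReal.ofReal (cconst j * (2 * t j) ^ d) * M :=
        ENNReal.tsum_le_tsum stepC
    _ ≤ ENNReal.ofReal (K * (1 - β)⁻¹ * r ^ η) * M := stepD

end CZ
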